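/- Let G = [I_k | A] be a systematic k×n generator matrix over F_q generating an [n,k,t] batch code with reconstruction sets of size at most r, where t ≥ 2 and r ≥ 1, and let d be the minimum Hamming distance of the code {x·G : x ∈ F_q^k}. Then n ≥ k + d + max_{2 ≤ β ≤ t, β ∈ ℕ} { (β−1)·(⌈ k/(r·β − β − r + 2) ⌉ − 1) } − 1. -/

import Mathlib

/-- Some `F`-linear combination of the columns of `G` indexed by `T` equals the vector `v`. -/
def ColLinComb {F : Type*} [Field F] {k n : ℕ} (G : Matrix (Fin k) (Fin n) F)
    (T : Finset (Fin n)) (v : Fin k → F) : Prop :=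
  ∃ c : Fin n → F, ∑ j ∈ T, c j • G.transpose j = v

/-- `G` generates an `[n,k,t]` batch code with reconstruction sets of size at most `r`. -/
def IsBatchCodeWith {F : Type*} [Field F] {k n : ℕ} (G : Matrix (Fin k) (Fin n) F)
    (t r : ℕ) : Prop :=
  ∀ idx : Fin t → Fin k, ∃ T : Fin t → Finset (Fin n),
    (∀ j₁ j₂ : Fin t, j₁ ≠ j₂ → Disjoint (T j₁) (T j₂)) ∧
    ∀ j : Fin t, (T j).card ≤ r ∧ ColLinComb G (T j) (Pi.single (idx j) 1)

section Aux

open Submodule Module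

variable {F : Type*} [Field F] {W : Type*} [AddCommGroup W] [Module F W]
  [FiniteDimensional F W] {ι : Type*} [DecidableEq ι] (g : ι → W)

private lemma mem_sp {I : Finset ι} {j : ι} (hj : j ∈ I) :
    g j ∈ span F (g '' (I : Set ι)) :=
  subset_span ⟨j, by simpa using hj, rfl⟩

private lemma sp_union (I R : Finset ι) :
    span F (g '' ((I ∪ R : Finset ι) : Set ι)) =
      span F (g '' (I : Set ι)) ⊔ span F (g '' ((R \ I : Finset ι) : Set ι)) := by
  rw [← Submodule.span_union, ← Set.image_union, Finset.coe_union, Finset.coe_sdiff,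
    Set.union_diff_self]

private lemma rank_sp_union_le (I R : Finset ι) :
    finrank F (span F (g '' ((I ∪ R : Finset ι) : Set ι))) ≤
      finrank F (span F (g '' (I : Set ι))) + (R \ I).card := by
  classical
  rw [sp_union]
  have h1 := Submodule.finrank_sup_add_finrank_inf_eq (span F (g '' (I : Set ι)))
    (span F (g '' ((R \ I : Finset ι) : Set ι)))
  have h2 : finrank F (span F (g '' ((R \ I : Finset ι) : Set ι))) ≤ (R \ I).card := by
    have h3 : g '' ((R \ I : Finset ι) : Set ι) = (((R \ I).image g : Finset W) : Set W) := by
      simp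
    rw [h3]
    exact le_trans (finrank_span_finset_le_card _) (Finset.card_image_le)
  omega

private lemma rank_sp_union_le_sub (I R : Finset ι) (u : W)
    (hu : u ∈ span F (g '' (I : Set ι))) (c : ι → F)
    (hc : ∑ j ∈ R, c j • g j = u) (j0 : ι) (hj0R : j0 ∈ R) (hj0I : j0 ∉ I)
    (hc0 : c j0 ≠ 0) :
    finrank F (span F (g '' ((I ∪ R : Finset ι) : Set ι))) + 1 ≤
      finrank F (span F (g '' (I : Set ι))) + (R \ I).card := by
  have hkey : span F (g '' ((I ∪ R : Finset ι) : Set ι)) =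
      span F (g '' ((I ∪ R.erase j0 : Finset ι) : Set ι)) := by
    apply le_antisymm
    · rw [Submodule.span_le]
      rintro v ⟨x, hx, rfl⟩
      simp only [Finset.coe_union, Set.mem_union, Finset.mem_coe] at hx
      by_cases hxj : x = j0
      · subst hxj
        have hsum := Finset.add_sum_erase R (fun j => c j • g j) hj0R
        rw [hc] at hsum
        have hsub : u - ∑ j ∈ R.erase x, c j • g j = c x • g x := by
          rw [← hsum]; abel
        have hgx : g x = (c x)⁻¹ • (u - ∑ j ∈ R.erase x, c j • g j) := by
          rw [hsub, smul_smul, inv_mul_cancel₀ hc0, one_smul]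
        rw [hgx]
        apply Submodule.smul_mem
        apply Submodule.sub_mem
        · exact Submodule.span_mono (Set.image_mono (by
            intro y hy; simp only [Finset.coe_union, Set.mem_union]; left; exact hy)) hu
        · apply Submodule.sum_mem
          intro j hj
          exact Submodule.smul_mem _ _ (mem_sp g (by simp [hj]))
      · rcases hx with hx | hx
        · exact mem_sp g (by simp [hx])
        · exact mem_sp g (by simp [Finset.mem_erase, hxj, hx])
    · exact Submodule.span_mono (Set.image_mono (by
        intro y hy
        simp only [Finset.coe_union, Set.mem_union, Finset.mem_coe] at hy ⊢
        rcases hy with hy | hy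
        · left; exact hy
        · right; exact Finset.mem_of_mem_erase hy))
  rw [hkey]
  have h1 := rank_sp_union_le (F := F) g I (R.erase j0)
  have h2 : R.erase j0 \ I = (R \ I).erase j0 := by
    ext x
    simp only [Finset.mem_sdiff, Finset.mem_erase]
    tauto
  have h3 : j0 ∈ R \ I := Finset.mem_sdiff.mpr ⟨hj0R, hj0I⟩
  have h4 : 1 ≤ (R \ I).card := Finset.card_pos.mpr ⟨j0, h3⟩
  rw [h2, Finset.card_erase_of_mem h3] at h1
  omega

/-- The key greedy accounting step: adding a family of pairwise disjoint reconstruction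
sets for a vector `e` not in the current span costs at most `|new columns| - (|J| - 1)`
in rank. -/
private lemma greedy_sets (e : W) (I : Finset ι) (he : e ∉ span F (g '' (I : Set ι)))
    {κ : Type*} [DecidableEq κ] (S : κ → Finset ι) (c : κ → ι → F) (J : Finset κ)
    (hdisj : ∀ j₁ ∈ J, ∀ j₂ ∈ J, j₁ ≠ j₂ → Disjoint (S j₁) (S j₂))
    (hsupp : ∀ j ∈ J, ∀ x ∈ S j, c j x ≠ 0)
    (hcomb : ∀ j ∈ J, ∑ x ∈ S j, c j x • g x = e) :
    (J.Nonempty → e ∈ span F (g '' ((I ∪ J.biUnion S : Finset ι) : Set ι))) ∧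
    finrank F (span F (g '' ((I ∪ J.biUnion S : Finset ι) : Set ι))) + J.card ≤
      finrank F (span F (g '' (I : Set ι))) + (J.biUnion S \ I).card + 1 := by
  induction J using Finset.induction_on with
  | empty =>
    constructor
    · simp
    · have h0 : I ∪ (∅ : Finset κ).biUnion S = I := by simp
      rw [h0]
      simp
  | @insert a J ha ih =>
    have hdisj' : ∀ j₁ ∈ J, ∀ j₂ ∈ J, j₁ ≠ j₂ → Disjoint (S j₁) (S j₂) := fun j₁ h₁ j₂ h₂ =>
      hdisj j₁ (Finset.mem_insert_of_mem h₁) j₂ (Finset.mem_insert_of_mem h₂)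
    have hsupp' : ∀ j ∈ J, ∀ x ∈ S j, c j x ≠ 0 := fun j h => hsupp j (Finset.mem_insert_of_mem h)
    have hcomb' : ∀ j ∈ J, ∑ x ∈ S j, c j x • g x = e := fun j h =>
      hcomb j (Finset.mem_insert_of_mem h)
    have hcomba : ∑ x ∈ S a, c a x • g x = e := hcomb a (Finset.mem_insert_self a J)
    obtain ⟨ihmem, ihrank⟩ := ih hdisj' hsupp' hcomb'
    set U : Finset ι := J.biUnion S with hU
    have hbi : (insert a J).biUnion S = S a ∪ U := Finset.biUnion_insert
    have hcardins : (insert a J).card = J.card + 1 := Finset.card_insert_of_notMem ha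
    rcases J.eq_empty_or_nonempty with rfl | hne
    · -- first set: no discount
      have hUe : U = (∅ : Finset ι) := by simp [hU]
      rw [hbi, hUe, Finset.union_empty, hcardins]
      constructor
      · intro _
        rw [← hcomba]
        exact Submodule.sum_mem _ fun x hx =>
          Submodule.smul_mem _ _ (mem_sp g (Finset.mem_union_right _ hx))
      · have := rank_sp_union_le (F := F) g I (S a)
        simp only [Finset.card_empty] at this ⊢
        omega
    · -- subsequent set: discount 1
      have hUmem : e ∈ span F (g '' ((I ∪ U : Finset ι) : Set ι)) := ihmem hne
      set X : Finset ι := I ∪ U with hX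
      have hSaU : Disjoint (S a) U := by
        rw [hU, Finset.disjoint_biUnion_right]
        intro j hj
        exact hdisj a (Finset.mem_insert_self a J) j (Finset.mem_insert_of_mem hj)
          (fun h => ha (h ▸ hj))
      have hnew : (S a \ X).Nonempty := by
        by_contra hempty
        rw [Finset.not_nonempty_iff_eq_empty, Finset.sdiff_eq_empty_iff_subset] at hempty
        have hsubI : S a ⊆ I := by
          intro x hx
          rcases Finset.mem_union.mp (hempty hx) with h | h
          · exact h
          · exact absurd h (Finset.disjoint_left.mp hSaU hx)
        apply he
        rw [← hcomba]
        exact Submodule.sum_mem _ fun x hx =>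
          Submodule.smul_mem _ _ (mem_sp g (hsubI hx))
      obtain ⟨j0, hj0⟩ := hnew
      have hj0Sa : j0 ∈ S a := (Finset.mem_sdiff.mp hj0).1
      have hj0X : j0 ∉ X := (Finset.mem_sdiff.mp hj0).2
      have hkey := rank_sp_union_le_sub g X (S a) e hUmem (c a) hcomba j0 hj0Sa hj0X
        (hsupp a (Finset.mem_insert_self a J) j0 hj0Sa)
      have hunion : I ∪ (insert a J).biUnion S = X ∪ S a := by
        rw [hbi, hX]; ext x; simp only [Finset.mem_union]; tauto
      have hcard : (U \ I).card + (S a \ X).card ≤ ((insert a J).biUnion S \ I).card := by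
        have hsub : (U \ I) ∪ (S a \ X) ⊆ (insert a J).biUnion S \ I := by
          intro x hx
          rw [hbi]
          rcases Finset.mem_union.mp hx with h | h
          · rw [Finset.mem_sdiff] at h ⊢
            exact ⟨Finset.mem_union_right _ h.1, h.2⟩
          · rw [Finset.mem_sdiff] at h ⊢
            rw [hX, Finset.mem_union] at h
            exact ⟨Finset.mem_union_left _ h.1, fun hI => h.2 (Or.inl hI)⟩
        have hdisj2 : Disjoint (U \ I) (S a \ X) := by
          apply Finset.disjoint_left.mpr
          intro x hx hx'
          have hxU : x ∈ U := (Finset.mem_sdiff.mp hx).1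
          have hxX : x ∉ X := (Finset.mem_sdiff.mp hx').2
          exact hxX (Finset.mem_union_right _ hxU)
        calc (U \ I).card + (S a \ X).card = ((U \ I) ∪ (S a \ X)).card :=
              (Finset.card_union_of_disjoint hdisj2).symm
          _ ≤ _ := Finset.card_le_card hsub
      constructor
      · intro _
        rw [hunion]
        exact Submodule.span_mono (Set.image_mono (by
          intro y hy
          simp only [Finset.coe_union, Set.mem_union, Finset.mem_coe] at hy ⊢
          tauto)) hUmem
      · rw [hunion, hcardins]
        omega

end Aux

/-- **Bound for systematic batch codes with restricted reconstruction sets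
(Zhang–Skachek).**  If a systematic `G = [I_k | A]` generates an `[n,k,t]` batch code with
reconstruction sets of size at most `r` (`t ≥ 2`, `r ≥ 1`), and `d` is the minimum
distance, then for every `2 ≤ β ≤ t`,
`n ≥ k + d + (β−1)·(⌈k/(r·β−β−r+2)⌉ − 1) − 1`; that is, `n` is at least the maximum of the
right-hand side over `2 ≤ β ≤ t`. -/
theorem bound_batch_restricted_systematic {F : Type*} [Field F] [Fintype F] [DecidableEq F]
    {k n t r d : ℕ} (ht : 2 ≤ t) (hr : 1 ≤ r)
    (G : Matrix (Fin k) (Fin n) F) (hkn : k ≤ n)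
    (hsys : ∀ i j : Fin k, G i (Fin.castLE hkn j) = if i = j then 1 else 0)
    (hB : IsBatchCodeWith G t r)
    (hd : IsLeast {w : ℕ | ∃ x : Fin k → F, x ≠ 0 ∧ hammingNorm (Matrix.vecMul x G) = w} d) :
    ∀ β : ℕ, 2 ≤ β → β ≤ t →
      (k : ℤ) + d + ((β : ℤ) - 1) *
          (⌈(k : ℚ) / ((r : ℚ) * β - β - r + 2)⌉ - 1) - 1 ≤ (n : ℤ) := by
  classical
  intro β hβ2 hβt
  rcases Nat.eq_zero_or_pos k with hk0 | hk
  · obtain ⟨x, hx, -⟩ := hd.1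
    subst hk0
    exact absurd (funext fun i => i.elim0) hx
  obtain ⟨r', rfl⟩ : ∃ r', r = r' + 1 := ⟨r - 1, by omega⟩
  obtain ⟨β', rfl⟩ : ∃ β', β = β' + 2 := ⟨β - 2, by omega⟩
  set s : ℕ := (β' + 1) * r' + 1 with hs
  -- columns of G, spans thereof
  have hcol : ∀ i : Fin k, G.transpose (Fin.castLE hkn i) = Pi.single i 1 := by
    intro i; funext i'
    rw [Matrix.transpose_apply, hsys i' i, Pi.single_apply]
  have hsingle : ∀ I : Finset (Fin n),
      Module.finrank F (Submodule.span F (G.transpose '' (I : Set (Fin n)))) < k →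
      ∃ i : Fin k, Pi.single i 1 ∉ Submodule.span F (G.transpose '' (I : Set (Fin n))) := by
    intro I hI
    by_contra hall
    push_neg at hall
    have htop : (⊤ : Submodule F (Fin k → F)) ≤
        Submodule.span F (G.transpose '' (I : Set (Fin n))) := by
      rw [← (Pi.basisFun F (Fin k)).span_eq, Submodule.span_le]
      rintro v ⟨i, rfl⟩
      rw [Pi.basisFun_apply]
      exact hall i
    have heq : Module.finrank F (Submodule.span F (G.transpose '' (I : Set (Fin n)))) = k := by
      rw [top_le_iff.mp htop, finrank_top, Module.finrank_pi, Fintype.card_fin]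
    omega
  -- one greedy step
  have hstep : ∀ I : Finset (Fin n),
      Module.finrank F (Submodule.span F (G.transpose '' (I : Set (Fin n)))) < k →
      ∃ I' : Finset (Fin n),
        Module.finrank F (Submodule.span F (G.transpose '' (I' : Set (Fin n)))) + (β' + 1)
            + I.card ≤
          Module.finrank F (Submodule.span F (G.transpose '' (I : Set (Fin n)))) + I'.card ∧
        I'.card ≤ I.card + ((β' + 1) * (r' + 1) + 1) := by
    intro I hI
    obtain ⟨i, he⟩ := hsingle I hI
    obtain ⟨T, hTdisj, hT⟩ := hB (fun _ => i)
    have hTcomb : ∀ j : Fin t, ∃ cc : Fin n → F,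
        ∑ x ∈ T j, cc x • G.transpose x = Pi.single i 1 := fun j => (hT j).2
    choose c hc using hTcomb
    set S : Fin t → Finset (Fin n) := fun j => (T j).filter (fun x => c j x ≠ 0) with hS
    have hSsum : ∀ j : Fin t, ∑ x ∈ S j, c j x • G.transpose x = Pi.single i 1 := by
      intro j
      rw [hS]
      rw [Finset.sum_filter_of_ne, hc j]
      intro x _ hne h0
      exact hne (by rw [h0, zero_smul])
    have hScard : ∀ j, (S j).card ≤ r' + 1 := fun j =>
      le_trans (Finset.card_le_card (Finset.filter_subset _ _)) (hT j).1
    have hSdisj : ∀ j₁ j₂ : Fin t, j₁ ≠ j₂ → Disjoint (S j₁) (S j₂) := fun j₁ j₂ hne =>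
      Finset.disjoint_of_subset_left (Finset.filter_subset _ _)
        (Finset.disjoint_of_subset_right (Finset.filter_subset _ _) (hTdisj j₁ j₂ hne))
    set ci : Fin n := Fin.castLE hkn i with hci
    set B : Finset (Fin t) := Finset.univ.filter (fun j => ci ∈ S j) with hBdef
    have hBcard : B.card ≤ 1 := by
      rw [Finset.card_le_one]
      intro a ha b hb
      by_contra hab
      have h1 : ci ∈ S a := (Finset.mem_filter.mp ha).2
      have h2 : ci ∈ S b := (Finset.mem_filter.mp hb).2
      exact (Finset.disjoint_left.mp (hSdisj a b hab) h1) h2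
    have hgoodcard : β' + 1 ≤ (Finset.univ \ B).card := by
      rw [Finset.card_sdiff_of_subset (Finset.subset_univ B), Finset.card_univ, Fintype.card_fin]
      omega
    obtain ⟨J, hJsub, hJcard⟩ := Finset.exists_subset_card_eq hgoodcard
    have hJdisj : ∀ j₁ ∈ J, ∀ j₂ ∈ J, j₁ ≠ j₂ → Disjoint (S j₁) (S j₂) :=
      fun j₁ _ j₂ _ h => hSdisj j₁ j₂ h
    have hJsupp : ∀ j ∈ J, ∀ x ∈ S j, c j x ≠ 0 := fun j _ x hx => (Finset.mem_filter.mp hx).2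
    have hJcomb : ∀ j ∈ J, ∑ x ∈ S j, c j x • G.transpose x = Pi.single i 1 :=
      fun j _ => hSsum j
    obtain ⟨hmem, hrank⟩ := greedy_sets (F := F) G.transpose (Pi.single i 1) I he S c J
      hJdisj hJsupp hJcomb
    set U : Finset (Fin n) := J.biUnion S with hU
    have hemem : Pi.single i 1 ∈
        Submodule.span F (G.transpose '' ((I ∪ U : Finset (Fin n)) : Set (Fin n))) :=
      hmem (Finset.card_pos.mp (by omega))
    have hciU : ci ∉ I ∪ U := by
      intro hmem'
      rcases Finset.mem_union.mp hmem' with h | h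
      · exact he (hcol i ▸ mem_sp G.transpose h)
      · obtain ⟨j, hj, hcij⟩ := Finset.mem_biUnion.mp h
        have hjg := hJsub hj
        rw [Finset.mem_sdiff, hBdef, Finset.mem_filter] at hjg
        exact hjg.2 ⟨Finset.mem_univ j, hcij⟩
    refine ⟨insert ci (I ∪ U), ?_, ?_⟩
    · have hspeq : Submodule.span F
          (G.transpose '' ((insert ci (I ∪ U) : Finset (Fin n)) : Set (Fin n))) =
          Submodule.span F (G.transpose '' ((I ∪ U : Finset (Fin n)) : Set (Fin n))) := by
        apply le_antisymm
        · rw [Submodule.span_le]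
          rintro v ⟨x, hx, rfl⟩
          rw [Finset.coe_insert, Set.mem_insert_iff] at hx
          rcases hx with rfl | hx
          · rw [hcol i]
            exact hemem
          · exact mem_sp G.transpose (Finset.mem_coe.mp hx)
        · exact Submodule.span_mono (Set.image_mono (by
            intro y hy
            rw [Finset.coe_insert, Set.mem_insert_iff]
            right; exact hy))
      rw [hspeq, Finset.card_insert_of_notMem hciU]
      have hcardU : (I ∪ U).card = I.card + (U \ I).card := by
        rw [← Finset.union_sdiff_self_eq_union]
        exact Finset.card_union_of_disjoint Finset.disjoint_sdiff
      rw [hJcard] at hrank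
      omega
    · have h1 : U.card ≤ (β' + 1) * (r' + 1) := by
        calc U.card ≤ ∑ j ∈ J, (S j).card := Finset.card_biUnion_le
          _ ≤ ∑ _j ∈ J, (r' + 1) := Finset.sum_le_sum (fun j _ => hScard j)
          _ = (β' + 1) * (r' + 1) := by rw [Finset.sum_const, smul_eq_mul, hJcard]
      have h2 : (insert ci (I ∪ U)).card ≤ (I ∪ U).card + 1 := Finset.card_insert_le _ _
      have h3 : (I ∪ U).card ≤ I.card + U.card := Finset.card_union_le _ _
      omega
  -- iterate the greedy step
  have hbuild : ∀ N : ℕ, N * s < k + s → ∃ I : Finset (Fin n),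
      Module.finrank F (Submodule.span F (G.transpose '' (I : Set (Fin n)))) + (β' + 1) * N ≤
        I.card ∧
      Module.finrank F (Submodule.span F (G.transpose '' (I : Set (Fin n)))) ≤ N * s := by
    intro N
    induction N with
    | zero =>
      intro _
      refine ⟨∅, ?_, ?_⟩ <;>
        simp [Finset.coe_empty, Set.image_empty, Submodule.span_empty, finrank_bot] <;>
        rintro _ ⟨_, h, _⟩ <;> exact h.elim
    | succ N ih =>
      intro hN
      have hmul : (N + 1) * s = N * s + s := by ring
      obtain ⟨I, hinv, hrk⟩ := ih (by omega)
      have hlt : Module.finrank F (Submodule.span F (G.transpose '' (I : Set (Fin n)))) < k := by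
        omega
      obtain ⟨I', h1, h2⟩ := hstep I hlt
      have hm2 : (β' + 1) * (N + 1) = (β' + 1) * N + (β' + 1) := by ring
      have hm3 : (β' + 1) * (r' + 1) + 1 = s + (β' + 1) := by rw [hs]; ring
      exact ⟨I', by omega, by omega⟩
  -- padding up to rank k - 1
  have hpad : ∀ m : ℕ, ∀ I : Finset (Fin n),
      Module.finrank F (Submodule.span F (G.transpose '' (I : Set (Fin n)))) + 1 + m = k →
      ∃ I' : Finset (Fin n),
        Module.finrank F (Submodule.span F (G.transpose '' (I' : Set (Fin n)))) + 1 = k ∧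
        I.card + Module.finrank F (Submodule.span F (G.transpose '' (I' : Set (Fin n)))) ≤
          I'.card + Module.finrank F (Submodule.span F (G.transpose '' (I : Set (Fin n)))) := by
    intro m
    induction m with
    | zero => exact fun I h => ⟨I, by omega, le_refl _⟩
    | succ m ih =>
      intro I h
      obtain ⟨i, he⟩ := hsingle I (by omega)
      set ci : Fin n := Fin.castLE hkn i with hci
      have hgci : G.transpose ci = Pi.single i 1 := hcol i
      have hciI : ci ∉ I := fun hmem => he (hgci ▸ mem_sp G.transpose hmem)
      have hle : Module.finrank F
          (Submodule.span F (G.transpose '' ((insert ci I : Finset (Fin n)) : Set (Fin n)))) ≤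
          Module.finrank F (Submodule.span F (G.transpose '' (I : Set (Fin n)))) + 1 := by
        have h4 := rank_sp_union_le (F := F) G.transpose I {ci}
        have hins : I ∪ {ci} = insert ci I := by ext x; simp [or_comm]
        rw [hins] at h4
        have h5 : ({ci} \ I : Finset (Fin n)).card ≤ 1 :=
          le_trans (Finset.card_le_card Finset.sdiff_subset) (by simp)
        omega
      have hlt : Module.finrank F (Submodule.span F (G.transpose '' (I : Set (Fin n)))) <
          Module.finrank F (Submodule.span F
            (G.transpose '' ((insert ci I : Finset (Fin n)) : Set (Fin n)))) := by
        apply Submodule.finrank_lt_finrank_of_lt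
        apply lt_of_le_of_ne
        · exact Submodule.span_mono (Set.image_mono (by
            rw [Finset.coe_insert]
            exact Set.subset_insert _ _))
        · intro heq
          apply he
          rw [heq]
          exact hgci ▸ mem_sp G.transpose (Finset.mem_insert_self ci I)
      obtain ⟨I', hI'1, hI'2⟩ := ih (insert ci I) (by omega)
      refine ⟨I', hI'1, ?_⟩
      rw [Finset.card_insert_of_notMem hciI] at hI'2
      omega
  -- the number M
  have hs1 : 1 ≤ s := by omega
  have hsQ : (0 : ℚ) < (s : ℚ) := by exact_mod_cast hs1
  have hkQ : (0 : ℚ) < (k : ℚ) := by exact_mod_cast hk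
  have hceil1 : 1 ≤ ⌈(k : ℚ) / (s : ℚ)⌉ := Int.ceil_pos.mpr (div_pos hkQ hsQ)
  set M : ℕ := (⌈(k : ℚ) / (s : ℚ)⌉ - 1).toNat with hM
  have hMcast : (M : ℤ) = ⌈(k : ℚ) / (s : ℚ)⌉ - 1 := Int.toNat_of_nonneg (by omega)
  have hMs : M * s < k := by
    have h1 : ((M : ℚ)) < (k : ℚ) / (s : ℚ) := by
      have h2 := Int.ceil_lt_add_one ((k : ℚ) / (s : ℚ))
      have h3 : ((M : ℤ) : ℚ) = ((⌈(k : ℚ) / (s : ℚ)⌉ : ℤ) : ℚ) - 1 := by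
        rw [hMcast]; push_cast; ring
      rw [Int.cast_natCast] at h3
      linarith
    have h2 : (M : ℚ) * (s : ℚ) < (k : ℚ) := (lt_div_iff₀ hsQ).mp h1
    exact_mod_cast h2
  -- assemble
  obtain ⟨I₀, hinv, hrk⟩ := hbuild M (by omega)
  obtain ⟨m0, hm0⟩ : ∃ m0,
      Module.finrank F (Submodule.span F (G.transpose '' (I₀ : Set (Fin n)))) + 1 + m0 = k :=
    ⟨k - 1 - Module.finrank F (Submodule.span F (G.transpose '' (I₀ : Set (Fin n)))), by omega⟩
  obtain ⟨I₁, hI₁rk, hI₁card⟩ := hpad m0 I₀ hm0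
  have hC : k - 1 + (β' + 1) * M ≤ I₁.card := by omega
  -- a nonzero codeword vanishing on I₁
  set Mx : Matrix {x // x ∈ I₁} (Fin k) F := fun j i0 => G.transpose (↑j) i0 with hMx
  have hrangeT : LinearMap.range (Matrix.mulVecLin Mx.transpose) =
      Submodule.span F (G.transpose '' (I₁ : Set (Fin n))) := by
    rw [Matrix.range_mulVecLin, Matrix.col_transpose]
    congr 1
    ext v
    constructor
    · rintro ⟨j, rfl⟩
      exact ⟨↑j, Finset.mem_coe.mpr j.2, rfl⟩
    · rintro ⟨x, hx, rfl⟩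
      exact ⟨⟨x, Finset.mem_coe.mp hx⟩, rfl⟩
  have hrank1 : Module.finrank F (LinearMap.range (Matrix.mulVecLin Mx)) + 1 = k := by
    have e1 : Module.finrank F (LinearMap.range Mx.mulVecLin) = Mx.rank := rfl
    have e2 : Mx.transpose.rank = Mx.rank := Matrix.rank_transpose Mx
    have e3 : Mx.transpose.rank =
        Module.finrank F (LinearMap.range (Matrix.mulVecLin Mx.transpose)) := rfl
    rw [e1, ← e2, e3, hrangeT]
    exact hI₁rk
  have hker : LinearMap.ker (Matrix.mulVecLin Mx) ≠ ⊥ := by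
    intro hbot
    have h6 := LinearMap.finrank_range_add_finrank_ker (Matrix.mulVecLin Mx)
    rw [hbot, finrank_bot, Module.finrank_pi, Fintype.card_fin] at h6
    omega
  obtain ⟨x, hxker, hx0⟩ := Submodule.exists_mem_ne_zero_of_ne_bot hker
  have hxv : Mx.mulVec x = 0 := hxker
  have hvan : ∀ j ∈ I₁, Matrix.vecMul x G j = 0 := by
    intro j hj
    have h7 := congrFun hxv ⟨j, hj⟩
    simpa [Matrix.mulVec, Matrix.vecMul, dotProduct, hMx, Matrix.transpose_apply,
      mul_comm] using h7
  -- weight bound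
  have hhn : hammingNorm (Matrix.vecMul x G) =
      (Finset.univ.filter fun j => Matrix.vecMul x G j ≠ 0).card := by
    simp [hammingNorm]
  have hw : hammingNorm (Matrix.vecMul x G) + I₁.card ≤ n := by
    have hdisj : Disjoint (Finset.univ.filter fun j => Matrix.vecMul x G j ≠ 0) I₁ := by
      rw [Finset.disjoint_left]
      intro a ha haI
      exact (Finset.mem_filter.mp ha).2 (hvan a haI)
    calc hammingNorm (Matrix.vecMul x G) + I₁.card
        = ((Finset.univ.filter fun j => Matrix.vecMul x G j ≠ 0) ∪ I₁).card := by
          rw [Finset.card_union_of_disjoint hdisj, hhn]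
      _ ≤ (Finset.univ : Finset (Fin n)).card := Finset.card_le_card (Finset.subset_univ _)
      _ = n := by rw [Finset.card_univ, Fintype.card_fin]
  have hdle : d ≤ hammingNorm (Matrix.vecMul x G) := hd.2 ⟨x, hx0, rfl⟩
  have hfinal : d + k + (β' + 1) * M ≤ n + 1 := by omega
  -- cast to the stated inequality
  have hden : ((r' + 1 : ℕ) : ℚ) * ((β' + 2 : ℕ) : ℚ) - ((β' + 2 : ℕ) : ℚ)
      - ((r' + 1 : ℕ) : ℚ) + 2 = (s : ℚ) := by
    rw [hs]; push_cast; ring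
  rw [hden, show ⌈(k : ℚ) / (s : ℚ)⌉ = (M : ℤ) + 1 by omega]
  have hfinalZ : (d : ℤ) + k + ((β' : ℤ) + 1) * M ≤ n + 1 := by exact_mod_cast hfinal
  push_cast
  ring_nf
  ring_nf at hfinalZ
  linarith
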